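/- Let (a_k)_{k≥1} be complex numbers with sup_{k≥1} |a_k| ≤ M for some finite M, let (c_k)_{k≥0} be defined from (a_k) by the MA recursion, and let (b_k)_{k≥0} be defined from (a_k) by the AR recursion. Then for every complex number z with |z| < 1, the series Σ_{k≥0} (−b_k) z^k converges absolutely, equals exp(−Σ_{k≥1} a_k z^k), and satisfies (Σ_{k≥0} c_k z^k) · (Σ_{k≥0} (−b_k) z^k) = 1. -/

import Mathlib

open Filter Topology

/-- The MA recursion: `c 0 = 1` and
`c (k+1) = ∑_{j=0}^{k} (1 - j/(k+1)) * a (k+1-j) * c j`. -/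
def IsMARec (a c : ℕ → ℂ) : Prop :=
  c 0 = 1 ∧
    ∀ k : ℕ, c (k + 1) =
      ∑ j ∈ Finset.range (k + 1), (1 - (j : ℂ) / ((k : ℂ) + 1)) * a (k + 1 - j) * c j

/-- The AR recursion: `b 0 = -1` and
`b (k+1) = -∑_{j=0}^{k} (1 - j/(k+1)) * a (k+1-j) * b j`. -/
def IsARRec (a b : ℕ → ℂ) : Prop :=
  b 0 = -1 ∧
    ∀ k : ℕ, b (k + 1) =
      -∑ j ∈ Finset.range (k + 1), (1 - (j : ℂ) / ((k : ℂ) + 1)) * a (k + 1 - j) * b j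

lemma maRec_norm_le (a c : ℕ → ℂ) (M : ℝ) (hM : ∀ k : ℕ, 1 ≤ k → ‖a k‖ ≤ M)
    (hM0 : 0 ≤ M) (hc : IsMARec a c) : ∀ k, ‖c k‖ ≤ (1 + M) ^ k := by
  intro k
  induction k using Nat.strong_induction_on with
  | _ k ih =>
    match k with
    | 0 => simp [hc.1]
    | (k + 1) =>
      rw [hc.2 k]
      calc ‖∑ j ∈ Finset.range (k+1), (1 - (j:ℂ)/((k:ℂ)+1)) * a (k+1-j) * c j‖
          ≤ ∑ j ∈ Finset.range (k+1), ‖(1 - (j:ℂ)/((k:ℂ)+1)) * a (k+1-j) * c j‖ :=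
            norm_sum_le _ _
        _ ≤ ∑ j ∈ Finset.range (k+1), M * (1+M)^j := by
            apply Finset.sum_le_sum
            intro j hj
            rw [Finset.mem_range, Nat.lt_succ_iff] at hj
            rw [norm_mul, norm_mul]
            have h1 : ‖(1:ℂ) - (j:ℂ)/((k:ℂ)+1)‖ ≤ 1 := by
              have he : ((1 : ℂ) - (j:ℂ)/((k:ℂ)+1)) = (((1 : ℝ) - (j:ℝ)/((k:ℝ)+1) : ℝ) : ℂ) := by
                push_cast; ring
              rw [he, Complex.norm_real, Real.norm_eq_abs, abs_of_nonneg, sub_le_self_iff]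
              · positivity
              · rw [sub_nonneg, div_le_one (by positivity)]
                have : (j:ℝ) ≤ (k:ℝ) := by exact_mod_cast hj
                linarith
            have h2 : ‖a (k+1-j)‖ ≤ M := hM _ (by omega)
            have h3 : ‖c j‖ ≤ (1+M)^j := ih j (by omega)
            calc ‖(1:ℂ) - (j:ℂ)/((k:ℂ)+1)‖ * ‖a (k+1-j)‖ * ‖c j‖
                ≤ 1 * M * (1+M)^j := by gcongr
              _ = M * (1+M)^j := by ring
        _ = (∑ j ∈ Finset.range (k+1), (1+M)^j) * ((1+M) - 1) := by
            rw [Finset.sum_mul]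
            exact Finset.sum_congr rfl fun j _ => by ring
        _ = (1+M)^(k+1) - 1 := geom_sum_mul _ _
        _ ≤ (1+M)^(k+1) := by linarith

lemma hasSum_of_isMARec (a c : ℕ → ℂ) (M : ℝ) (hM : ∀ k : ℕ, 1 ≤ k → ‖a k‖ ≤ M)
    (hc : IsMARec a c) {z : ℂ} (hz : ‖z‖ < 1) :
    HasSum (fun k : ℕ => c k * z ^ k)
      (Complex.exp (∑' k : ℕ, a (k + 1) * z ^ (k + 1))) := by
  have hM0 : 0 ≤ M := le_trans (norm_nonneg _) (hM 1 le_rfl)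
  have h1M : (0:ℝ) < 1 + M := by linarith
  set A : ℂ → ℂ := fun w => ∑' k : ℕ, a (k + 1) * w ^ (k + 1) with hA
  set f : ℂ → ℂ := fun w => ∑' k : ℕ, c k * w ^ k with hf
  obtain ⟨r, hr0, hrM, hr1⟩ : ∃ r : ℝ, 0 < r ∧ (1 + M) * r = 2⁻¹ ∧ r < 1 := by
    refine ⟨(2 * (1 + M))⁻¹, by positivity, ?_, ?_⟩
    · field_simp
    · rw [inv_lt_one₀ (by positivity)]; nlinarith
  have hcb : ∀ k, ‖c k‖ ≤ (1 + M) ^ k := maRec_norm_le a c M hM hM0 hc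
  have huA : ∀ t : ℝ, 0 < t → t < 1 → Summable (fun k : ℕ => M * (((k:ℝ) + 1) * t ^ k)) := by
    intro t ht0 ht
    apply Summable.mul_left
    have h1 : Summable (fun k : ℕ => (k:ℝ) * t ^ k) := by
      simpa using summable_pow_mul_geometric_of_norm_lt_one 1
        (by rwa [Real.norm_eq_abs, abs_of_pos ht0] : ‖t‖ < 1)
    have h2 : Summable (fun k : ℕ => t ^ k) :=
      summable_geometric_of_lt_one ht0.le ht
    simpa [add_mul] using h1.add h2
  have hboundA : ∀ (t : ℝ) (k : ℕ) (w : ℂ), ‖w‖ ≤ t →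
      ‖a (k + 1) * (((k:ℂ) + 1) * w ^ k)‖ ≤ M * (((k:ℝ) + 1) * t ^ k) := by
    intro t k w hw
    rw [norm_mul, norm_mul, norm_pow]
    have hn : ‖((k:ℂ)+1)‖ = (k:ℝ)+1 := by
      rw [show ((k:ℂ)+1) = (((k+1:ℕ)):ℂ) by push_cast; ring, Complex.norm_natCast]
      push_cast; ring
    rw [hn]
    gcongr
    · exact hM _ (by omega)
  have huD : Summable (fun n : ℕ => (1+M) * 2 * ((n:ℝ) * (2⁻¹:ℝ) ^ n)) := by
    apply Summable.mul_left
    simpa using summable_pow_mul_geometric_of_norm_lt_one 1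
      (by rw [Real.norm_eq_abs, abs_of_pos (by norm_num)]; norm_num : ‖(2⁻¹:ℝ)‖ < 1)
  have hboundD : ∀ (n : ℕ) (w : ℂ), ‖w‖ ≤ r →
      ‖c n * ((n:ℂ) * w ^ (n-1))‖ ≤ (1+M) * 2 * ((n:ℝ) * (2⁻¹:ℝ) ^ n) := by
    intro n w hw
    rw [norm_mul, norm_mul, norm_pow, Complex.norm_natCast]
    match n with
    | 0 => simp
    | (m+1) =>
      simp only [Nat.add_sub_cancel]
      push_cast
      have h1 : ‖c (m+1)‖ * (((m:ℝ)+1) * ‖w‖ ^ m) ≤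
          (1+M)^(m+1) * (((m:ℝ)+1) * r ^ m) := by
        gcongr
        · exact hcb _
      have h2 : (1+M)^(m+1) * (((m:ℝ)+1) * r ^ m) =
          (1+M) * 2 * (((m:ℝ)+1) * (2⁻¹:ℝ) ^ (m+1)) := by
        rw [show (1+M)^(m+1) * (((m:ℝ)+1) * r ^ m)
            = ((m:ℝ)+1) * ((1+M) * ((1+M)^m * r^m)) by ring,
          ← mul_pow (1+M) r m, hrM, pow_succ]
        ring
      calc ‖c (m+1)‖ * (((m:ℝ)+1) * ‖w‖ ^ m) ≤ (1+M)^(m+1) * (((m:ℝ)+1) * r ^ m) := h1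
        _ = _ := h2
  -- derivative of A on balls of radius t < 1
  have hAd : ∀ t : ℝ, t < 1 → ∀ y : ℂ, ‖y‖ < t →
      HasDerivAt A (∑' k : ℕ, a (k + 1) * (((k:ℂ) + 1) * y ^ k)) y := by
    intro t ht y hy
    have ht0 : 0 < t := lt_of_le_of_lt (norm_nonneg y) hy
    have hu := huA t ht0 ht
    refine hasDerivAt_tsum_of_isPreconnected
      (g := fun (k : ℕ) (w : ℂ) => a (k + 1) * w ^ (k + 1))
      (g' := fun (k : ℕ) (w : ℂ) => a (k + 1) * (((k:ℂ) + 1) * w ^ k))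
      hu Metric.isOpen_ball
      (convex_ball (0:ℂ) t).isPreconnected (fun k w hw => ?_) (fun k w hw => ?_)
      (Metric.mem_ball_self ht0) ?_ (by rwa [mem_ball_zero_iff])
    · simpa using (hasDerivAt_pow (k+1) w).const_mul (a (k+1))
    · exact hboundA t k w (by rw [mem_ball_zero_iff] at hw; exact hw.le)
    · have : (fun k : ℕ => a (k+1) * (0:ℂ)^(k+1)) = fun _ => 0 := funext fun k => by simp
      rw [this]; exact summable_zero
  -- derivative of f on the ball of radius r
  have hfd : ∀ y : ℂ, ‖y‖ < r →
      HasDerivAt f (∑' n : ℕ, c n * ((n:ℂ) * y ^ (n - 1))) y := by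
    intro y hy
    refine hasDerivAt_tsum_of_isPreconnected
      (g := fun (n : ℕ) (w : ℂ) => c n * w ^ n)
      (g' := fun (n : ℕ) (w : ℂ) => c n * ((n:ℂ) * w ^ (n - 1)))
      huD Metric.isOpen_ball
      (convex_ball (0:ℂ) r).isPreconnected (fun n w hw => ?_) (fun n w hw => ?_)
      (Metric.mem_ball_self hr0) ?_ (by rwa [mem_ball_zero_iff])
    · exact (hasDerivAt_pow n w).const_mul (c n)
    · exact hboundD n w (by rw [mem_ball_zero_iff] at hw; exact hw.le)
    · apply summable_of_ne_finset_zero (s := {0})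
      intro n hn
      simp only [Finset.mem_singleton] at hn
      simp [zero_pow hn]
  -- norm summability of the series for f
  have hsf : ∀ w : ℂ, ‖w‖ < r → Summable fun j : ℕ => ‖c j * w ^ j‖ := by
    intro w hw
    apply Summable.of_nonneg_of_le (fun n => norm_nonneg _) ?_
      (summable_geometric_of_lt_one (by norm_num) (by norm_num) :
        Summable fun n : ℕ => (2⁻¹:ℝ)^n)
    intro n
    rw [norm_mul, norm_pow]
    calc ‖c n‖ * ‖w‖^n ≤ (1+M)^n * r^n := by gcongr; exact hcb n
      _ = ((1+M)*r)^n := (mul_pow _ _ _).symm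
      _ = (2⁻¹:ℝ)^n := by rw [hrM]
  -- the Cauchy product identity
  have hDeq : ∀ y : ℂ, ‖y‖ < r →
      ∑' n : ℕ, c n * ((n:ℂ) * y ^ (n - 1)) =
        (∑' k : ℕ, a (k + 1) * (((k:ℂ) + 1) * y ^ k)) * f y := by
    intro y hy
    have hsg : Summable fun k : ℕ => ‖a (k+1) * (((k:ℂ)+1) * y ^ k)‖ :=
      Summable.of_nonneg_of_le (fun n => norm_nonneg _)
        (fun k => hboundA r k y hy.le) (huA r hr0 hr1)
    have hmul := tsum_mul_tsum_eq_tsum_sum_range_of_summable_norm (hsf y hy) hsg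
    have hinner : ∀ n : ℕ, ∑ i ∈ Finset.range (n+1),
        (c i * y ^ i) * (a (n - i + 1) * (((((n - i : ℕ)):ℂ) + 1) * y ^ (n - i)))
        = c (n+1) * (((n:ℂ)+1) * y ^ n) := by
      intro n
      have hstep : ∀ i ∈ Finset.range (n+1),
          (c i * y ^ i) * (a (n - i + 1) * (((((n - i : ℕ)):ℂ) + 1) * y ^ (n - i)))
          = ((((n + 1 - i : ℕ)):ℂ) * a (n + 1 - i) * c i) * y ^ n := by
        intro i hi
        rw [Finset.mem_range, Nat.lt_succ_iff] at hi
        have h1 : n - i + 1 = n + 1 - i := by omega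
        have h2 : ((((n - i : ℕ)):ℂ) + 1) = (((n + 1 - i : ℕ)):ℂ) := by
          rw [← h1]; push_cast; ring
        have h3 : y ^ i * y ^ (n - i) = y ^ n := by
          rw [← pow_add]; congr 1; omega
        rw [h1, h2, show (c i * y ^ i) * (a (n+1-i) * ((((n+1-i:ℕ)):ℂ) * y ^ (n - i)))
            = ((((n+1-i:ℕ)):ℂ) * a (n+1-i) * c i) * (y ^ i * y ^ (n-i)) by ring, h3]
      rw [Finset.sum_congr rfl hstep, ← Finset.sum_mul]
      have hkey : ∑ i ∈ Finset.range (n+1), ((((n+1-i : ℕ)):ℂ) * a (n+1-i) * c i)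
          = ((n:ℂ)+1) * c (n+1) := by
        rw [hc.2 n, Finset.mul_sum]
        refine Finset.sum_congr rfl fun i hi => ?_
        rw [Finset.mem_range, Nat.lt_succ_iff] at hi
        have hne : ((n:ℂ) + 1) ≠ 0 := Nat.cast_add_one_ne_zero n
        have hcast : (((n+1-i : ℕ)):ℂ) = ((n:ℂ)+1) - (i:ℂ) := by
          rw [Nat.cast_sub (by omega)]; push_cast; ring
        rw [hcast]
        field_simp
      rw [hkey]; ring
    have hsD : Summable fun n : ℕ => c n * ((n:ℂ) * y ^ (n - 1)) :=
      Summable.of_norm (Summable.of_nonneg_of_le (fun n => norm_nonneg _)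
        (fun n => hboundD n y hy.le) huD)
    rw [Summable.tsum_eq_zero_add hsD]
    simp only [Nat.cast_zero, zero_mul, mul_zero, zero_add]
    calc ∑' n : ℕ, c (n+1) * ((((n+1:ℕ)):ℂ) * y ^ (n+1-1))
        = ∑' n : ℕ, ∑ i ∈ Finset.range (n+1),
            (c i * y ^ i) * (a (n - i + 1) * (((((n - i : ℕ)):ℂ) + 1) * y ^ (n - i))) := by
          refine tsum_congr fun n => ?_
          rw [hinner n]
          simp only [Nat.add_sub_cancel]
          push_cast
          ring
      _ = (∑' j : ℕ, c j * y ^ j) * (∑' k : ℕ, a (k+1) * (((k:ℂ)+1) * y ^ k)) := hmul.symm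
      _ = _ := mul_comm _ _
  have hA0 : A 0 = 0 := by
    rw [hA]
    simp
  have hf0 : f 0 = 1 := by
    rw [hf]
    simp only []
    rw [tsum_eq_single 0 (fun n hn => by simp [zero_pow hn])]
    simp [hc.1]
  -- f = exp ∘ A on the small ball
  have key : ∀ y : ℂ, ‖y‖ < r → f y = Complex.exp (A y) := by
    have hderiv0 : ∀ x ∈ Metric.ball (0:ℂ) r,
        HasDerivWithinAt (fun w => Complex.exp (-A w) * f w) 0 (Metric.ball (0:ℂ) r) x := by
      intro x hx
      rw [mem_ball_zero_iff] at hx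
      have hA' := hAd r hr1 x hx
      have hf' := hfd x hx
      have hexp' : HasDerivAt (fun w => Complex.exp (-A w))
          (Complex.exp (-A x) * -(∑' k : ℕ, a (k + 1) * (((k:ℂ) + 1) * x ^ k))) x :=
        HasDerivAt.cexp hA'.neg
      have hprod := hexp'.mul hf'
      have hzero : Complex.exp (-A x) * -(∑' k : ℕ, a (k + 1) * (((k:ℂ) + 1) * x ^ k)) * f x
          + Complex.exp (-A x) * (∑' n : ℕ, c n * ((n:ℂ) * x ^ (n - 1))) = 0 := by
        rw [hDeq x hx]; ring
      rw [hzero] at hprod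
      exact hprod.hasDerivWithinAt
    intro y hy
    have h0mem : (0:ℂ) ∈ Metric.ball (0:ℂ) r := Metric.mem_ball_self hr0
    have hymem : y ∈ Metric.ball (0:ℂ) r := mem_ball_zero_iff.mpr hy
    have hle := Convex.norm_image_sub_le_of_norm_hasDerivWithin_le (C := 0)
      hderiv0 (fun x _ => by simp) (convex_ball (0:ℂ) r) h0mem hymem
    have heq : Complex.exp (-A y) * f y = Complex.exp (-A 0) * f 0 := by
      have h1 : ‖Complex.exp (-A y) * f y - Complex.exp (-A 0) * f 0‖ ≤ 0 := by
        simpa using hle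
      exact sub_eq_zero.mp (norm_le_zero_iff.mp h1)
    rw [hA0, hf0] at heq
    simp only [neg_zero, Complex.exp_zero, one_mul, mul_one] at heq
    have hinv : Complex.exp (A y) * Complex.exp (-A y) = 1 := by
      rw [← Complex.exp_add]; simp
    calc f y = (Complex.exp (A y) * Complex.exp (-A y)) * f y := by rw [hinv, one_mul]
      _ = Complex.exp (A y) * (Complex.exp (-A y) * f y) := by ring
      _ = Complex.exp (A y) := by rw [heq, mul_one]
  -- power series of f with coefficients c
  obtain ⟨rn, hrn⟩ : ∃ rn : NNReal, (rn : ℝ) = r := ⟨⟨r, hr0.le⟩, rfl⟩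
  have hfps : HasFPowerSeriesOnBall f (FormalMultilinearSeries.ofScalars ℂ c) 0 rn := by
    refine ⟨?_, ?_, ?_⟩
    · apply FormalMultilinearSeries.le_radius_of_bound _ 1
      intro n
      rw [FormalMultilinearSeries.ofScalars_norm, hrn]
      calc ‖c n‖ * r ^ n ≤ (1+M)^n * r^n := by gcongr; exact hcb n
        _ = ((1+M)*r)^n := (mul_pow _ _ _).symm
        _ = (2⁻¹:ℝ)^n := by rw [hrM]
        _ ≤ 1 := pow_le_one₀ (by norm_num) (by norm_num)
    · have h1 : (0:ℝ) < (rn:ℝ) := hrn ▸ hr0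
      exact_mod_cast h1
    · intro y hy
      rw [mem_emetric_ball_zero_iff] at hy
      have hyr : ‖y‖ < r := by
        rw [← hrn]
        exact_mod_cast hy
      simp only [zero_add]
      have hterm : (fun n : ℕ => FormalMultilinearSeries.ofScalars ℂ c n fun _ => y)
          = fun n => c n * y ^ n := by
        funext n
        rw [FormalMultilinearSeries.ofScalars_apply_eq]
        simp [smul_eq_mul]
      rw [hterm]
      exact ((hsf y hyr).of_norm).hasSum
  -- exp ∘ A is analytic on a closed ball of radius R, ‖z‖ < R < 1
  obtain ⟨R, hzR, hR1⟩ : ∃ R : NNReal, ‖z‖ < (R:ℝ) ∧ (R:ℝ) < 1 :=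
    ⟨Real.toNNReal ((‖z‖+1)/2), by rw [Real.coe_toNNReal _ (by positivity)]; linarith,
      by rw [Real.coe_toNNReal _ (by positivity)]; linarith⟩
  have hR0 : 0 < R := by
    have h1 : (0:ℝ) < (R:ℝ) := (norm_nonneg z).trans_lt hzR
    exact_mod_cast h1
  have hdiff : DifferentiableOn ℂ (fun w => Complex.exp (A w)) (Metric.closedBall 0 (R:ℝ)) := by
    intro w hw
    rw [Metric.mem_closedBall, dist_zero_right] at hw
    have hw1 : ‖w‖ < ((R:ℝ) + 1)/2 := by linarith
    have ht1 : ((R:ℝ) + 1)/2 < 1 := by linarith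
    exact ((hAd _ ht1 w hw1).cexp).differentiableAt.differentiableWithinAt
  have hgball := hdiff.hasFPowerSeriesOnBall hR0
  have hgat : HasFPowerSeriesAt (fun w => Complex.exp (A w))
      (FormalMultilinearSeries.ofScalars ℂ c) 0 := by
    apply hfps.hasFPowerSeriesAt.congr
    filter_upwards [Metric.ball_mem_nhds (0:ℂ) hr0] with w hw
    exact key w (mem_ball_zero_iff.mp hw)
  have hpq := hgball.hasFPowerSeriesAt.eq_formalMultilinearSeries hgat
  have hzmem : z ∈ Metric.eball (0:ℂ) (R : ENNReal) := by
    rw [mem_emetric_ball_zero_iff]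
    exact_mod_cast hzR
  have hsum := hgball.hasSum hzmem
  rw [hpq] at hsum
  simp only [zero_add] at hsum
  have hterm : (fun n : ℕ => FormalMultilinearSeries.ofScalars ℂ c n fun _ => z)
      = fun n => c n * z ^ n := by
    funext n
    rw [FormalMultilinearSeries.ofScalars_apply_eq]
    simp [smul_eq_mul]
  rw [hterm] at hsum
  exact hsum


/-- If `sup_{k ≥ 1} ‖a k‖ ≤ M`, `(c k)` is obtained from `(a k)` by the MA recursion and
`(b k)` by the AR recursion, then for every `z` with `‖z‖ < 1` the series
`∑_{k ≥ 0} (-(b k)) * z ^ k` converges absolutely, equals `exp (-∑_{k ≥ 1} a k * z ^ k)`,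
and `(∑_{k ≥ 0} c k * z ^ k) * (∑_{k ≥ 0} (-(b k)) * z ^ k) = 1`. -/
theorem statement1 (a c b : ℕ → ℂ) (M : ℝ)
    (hM : ∀ k : ℕ, 1 ≤ k → ‖a k‖ ≤ M)
    (hc : IsMARec a c) (hb : IsARRec a b) :
    ∀ z : ℂ, ‖z‖ < 1 →
      Summable (fun k : ℕ => ‖(-(b k)) * z ^ k‖) ∧
      ∑' k : ℕ, (-(b k)) * z ^ k = Complex.exp (-∑' k : ℕ, a (k + 1) * z ^ (k + 1)) ∧
      (∑' k : ℕ, c k * z ^ k) * (∑' k : ℕ, (-(b k)) * z ^ k) = 1 := by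
  intro z hz
  have hMneg : ∀ k : ℕ, 1 ≤ k → ‖(fun k => -a k) k‖ ≤ M := fun k hk => by
    simpa using hM k hk
  have hd : IsMARec (fun k => -a k) (fun k => -b k) := by
    constructor
    · simp [hb.1]
    · intro k
      show -b (k + 1) = _
      rw [hb.2 k, neg_neg]
      exact Finset.sum_congr rfl fun j hj => by ring
  have h1 := hasSum_of_isMARec a c M hM hc hz
  have h2 := hasSum_of_isMARec (fun k => -a k) (fun k => -b k) M hMneg hd hz
  have hneg : ∑' k : ℕ, (fun k => -a k) (k + 1) * z ^ (k + 1)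
      = -∑' k : ℕ, a (k + 1) * z ^ (k + 1) := by
    rw [← tsum_neg]
    exact tsum_congr fun k => by ring
  rw [hneg] at h2
  refine ⟨?_, ?_, ?_⟩
  · exact summable_norm_iff.mpr h2.summable
  · exact h2.tsum_eq
  · rw [h1.tsum_eq, h2.tsum_eq, ← Complex.exp_add]
    simp
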